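/- If each X_s ~ N(μ_s, Σ_s) with ‖β_s‖ ≠ 0 and the distribution-function identities F_s(y) = Φ((y − α_s°)/‖β_s°‖) hold, then the forecast Ŷ°(x,s) = Σ_i p_i F_i⁻¹(F_s(α_s + β_sᵀx)) satisfies demographic parity: the distribution of Ŷ°(X_s, s) is the same for all s. -/

import Mathlib

open MeasureTheory ProbabilityTheory Finset

/-- Under normality of each bank's features, the projection-to-fairness forecast
`Ŷ°(x,s) = Σ_i p_i F_i⁻¹(F_s(α_s + β_sᵀx))` satisfies demographic parity: the distribution
of `Ŷ°(X_s, s)` is the same for all banks `s`. -/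
theorem stmt10
    {Ω : Type*} [MeasurableSpace Ω] (P : Measure Ω) [IsProbabilityMeasure P]
    (n d : ℕ) (p : Fin (n + 1) → ℝ) (hp : ∀ s, 0 < p s) (hpsum : ∑ s, p s = 1)
    -- bank-specific feature vectors
    (X : Fin (n + 1) → Ω → EuclideanSpace ℝ (Fin d))
    (hX : ∀ s, Measurable (X s))
    (αb : Fin (n + 1) → ℝ) (βb μv : Fin (n + 1) → EuclideanSpace ℝ (Fin d))
    (hβ : ∀ s, ‖βb s‖ ≠ 0)
    (αo : Fin (n + 1) → ℝ) (hαo : ∀ s, αo s = αb s + (inner ℝ (βb s) (μv s) : ℝ))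
    (βo : Fin (n + 1) → EuclideanSpace ℝ (Fin d)) (hβo : ∀ s, ‖βo s‖ ≠ 0)
    -- normality: α_s + β_sᵀX_s ~ N(α_s°, ‖β_s°‖²)
    (hnormal : ∀ s, Measure.map (fun ω => αb s + (inner ℝ (βb s) (X s ω) : ℝ)) P
      = gaussianReal (αo s) (‖βo s‖₊ ^ 2))
    -- distribution-function identities F_s(y) = Φ((y − α_s°)/‖β_s°‖)
    (F : Fin (n + 1) → ℝ → ℝ)
    (hF : ∀ s y, F s y = cdf (gaussianReal 0 1) ((y - αo s) / ‖βo s‖))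
    -- F_i⁻¹ : a left inverse of F_i
    (Finv : Fin (n + 1) → ℝ → ℝ)
    (hFinv : ∀ i y, Finv i (F i y) = y)
    -- the projection-to-fairness forecast
    (Yhat : EuclideanSpace ℝ (Fin d) → Fin (n + 1) → ℝ)
    (hYhat : ∀ x s, Yhat x s = ∑ i, p i * Finv i (F s (αb s + (inner ℝ (βb s) x : ℝ)))) :
    ∀ s t : Fin (n + 1),
      Measure.map (fun ω => Yhat (X s ω) s) P = Measure.map (fun ω => Yhat (X t ω) t) P := by
  have key : ∀ s : Fin (n + 1), Measure.map (fun ω => Yhat (X s ω) s) P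
      = Measure.map (fun z => (∑ i, p i * αo i) + (∑ i, p i * ‖βo i‖) * z)
          (gaussianReal 0 1) := by
    intro s
    set A : ℝ := ∑ i, p i * αo i with hA
    set B : ℝ := ∑ i, p i * ‖βo i‖ with hB
    set Z : Ω → ℝ := fun ω => (αb s + (inner ℝ (βb s) (X s ω) : ℝ) - αo s) / ‖βo s‖ with hZ
    have hpt : (fun ω => Yhat (X s ω) s) = fun ω => A + B * Z ω := by
      funext ω
      have hFi : ∀ i : Fin (n + 1), F i (αo i + ‖βo i‖ * Z ω) = F s (αb s + (inner ℝ (βb s) (X s ω) : ℝ)) := by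
        intro i
        rw [hF, hF]
        congr 1
        rw [hZ]
        field_simp
        rw [add_sub_cancel_left, mul_div_assoc, mul_div_cancel_left₀ _ (hβo i)]
      have hterm : ∀ i : Fin (n + 1), Finv i (F s (αb s + (inner ℝ (βb s) (X s ω) : ℝ)))
          = αo i + ‖βo i‖ * Z ω := by
        intro i
        rw [← hFi i, hFinv]
      rw [hYhat]
      calc ∑ i, p i * Finv i (F s (αb s + (inner ℝ (βb s) (X s ω) : ℝ)))
          = ∑ i, (p i * αo i + p i * ‖βo i‖ * Z ω) := by
            refine Finset.sum_congr rfl fun i _ => ?_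
            rw [hterm i]; ring
        _ = A + B * Z ω := by
            rw [Finset.sum_add_distrib, ← Finset.sum_mul, hA, hB]
    have hYmeas : Measurable (fun ω => αb s + (inner ℝ (βb s) (X s ω) : ℝ)) :=
      measurable_const.add (measurable_const.inner (hX s))
    have hZmeas : Measurable Z := (hYmeas.sub measurable_const).div_const _
    have hmapZ : Measure.map Z P = gaussianReal 0 1 := by
      have h1 : Z = (fun y => (y - αo s) / ‖βo s‖) ∘ (fun ω => αb s + (inner ℝ (βb s) (X s ω) : ℝ)) := rfl
      have h2 : (fun y : ℝ => (y - αo s) / ‖βo s‖)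
          = (fun y => y + (-(αo s) / ‖βo s‖)) ∘ (fun y => ‖βo s‖⁻¹ * y) := by
        funext y; simp only [Function.comp_apply]; field_simp; ring
      have hφ : Measurable (fun y : ℝ => (y - αo s) / ‖βo s‖) := by fun_prop
      have hφ1 : Measurable (fun y : ℝ => ‖βo s‖⁻¹ * y) := by fun_prop
      have hφ2 : Measurable (fun y : ℝ => y + -(αo s) / ‖βo s‖) := by fun_prop
      rw [h1, ← Measure.map_map hφ hYmeas, hnormal s,
        h2, ← Measure.map_map hφ2 hφ1]
      rw [gaussianReal_map_const_mul, gaussianReal_map_add_const]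
      have hmean : ‖βo s‖⁻¹ * αo s + -(αo s) / ‖βo s‖ = 0 := by field_simp; ring
      have hvar : (⟨(‖βo s‖⁻¹) ^ 2, sq_nonneg _⟩ * ‖βo s‖₊ ^ 2 : NNReal) = 1 := by
        apply NNReal.coe_injective
        push_cast
        field_simp
        show (1 / ‖βo s‖ ^ 2) * ‖βo s‖ ^ 2 = 1
        exact one_div_mul_cancel (pow_ne_zero 2 (hβo s))
      rw [hmean]; exact congrArg (gaussianReal 0) hvar
    have hg : Measurable (fun z : ℝ => A + B * z) := by fun_prop
    rw [hpt, show (fun ω => A + B * Z ω) = (fun z => A + B * z) ∘ Z from rfl,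
      ← Measure.map_map hg hZmeas, hmapZ]
  intro s t
  rw [key s, key t]
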